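/- Let C be a cartesian category. If f : X ⟶ Y is an effective descent morphism and g : Z ⟶ Y is any morphism of C, then the pullback of f along g, i.e., the projection π : Z ×_Y X ⟶ Z, is an effective descent morphism. -/

import Mathlib

open CategoryTheory Limits

universe v₁ v₂ v₃ u₁ u₂ u₃

/-- A morphism `f : X ⟶ Y` of a cartesian category is an effective descent morphism if the
pullback functor `f* : C/Y ⥤ C/X` is monadic. -/
def EffectiveDescentMorphism {C : Type u₁} [Category.{v₁} C] [HasFiniteLimits C]
    {X Y : C} (f : X ⟶ Y) : Prop :=
  Nonempty (MonadicRightAdjoint (Over.pullback f))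

section EffDescAux

variable {C' : Type u₂} [Category.{v₂} C'] {D' : Type u₃} [Category.{v₃} D']

/-- Split coequalizers transport along a natural isomorphism of functors. -/
lemma hasSplitCoequalizer_of_natIso {F G : C' ⥤ D'} (α : F ≅ G)
    {A B : C'} (u v : A ⟶ B) [h : HasSplitCoequalizer (F.map u) (F.map v)] :
    HasSplitCoequalizer (G.map u) (G.map v) := by
  obtain ⟨W, hπ, ⟨t⟩⟩ := h.splittable
  refine ⟨⟨W, α.inv.app B ≫ hπ, ⟨{
    rightSection := t.rightSection ≫ α.hom.app B
    leftSection := α.inv.app B ≫ t.leftSection ≫ α.hom.app A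
    condition := ?_
    rightSection_π := ?_
    leftSection_bottom := ?_
    leftSection_top := ?_ }⟩⟩⟩
  · rw [← NatIso.naturality_1 α u, ← NatIso.naturality_1 α v]
    simp [t.condition_assoc, t.condition]
  · simp
  · rw [← NatIso.naturality_1 α v]
    simp [← NatTrans.naturality]
  · rw [← NatIso.naturality_1 α u]
    simp [← NatTrans.naturality, t.leftSection_top_assoc]

/-- A monadic right adjoint reflects isomorphisms. -/
lemma reflectsIsomorphisms_of_monadic (R : D' ⥤ C') [MonadicRightAdjoint R] :
    R.ReflectsIsomorphisms := by
  constructor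
  intro A B u hu
  have h1 : IsIso ((Monad.comparison (monadicAdjunction R) ⋙
      (monadicAdjunction R).toMonad.forget).map u) :=
    (NatIso.isIso_map_iff (Monad.comparisonForget (monadicAdjunction R)) u).2 hu
  have h1' : IsIso ((monadicAdjunction R).toMonad.forget.map
      ((Monad.comparison (monadicAdjunction R)).map u)) := h1
  have h2 : IsIso ((Monad.comparison (monadicAdjunction R)).map u) :=
    isIso_of_reflects_iso _ (monadicAdjunction R).toMonad.forget
  exact isIso_of_reflects_iso u (Monad.comparison (monadicAdjunction R))

/-- The Beck–Chevalley isomorphism for a pullback square. -/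
noncomputable def effDescBCIso {C : Type u₁} [Category.{v₁} C] [HasFiniteLimits C]
    {X Y Z : C} (f : X ⟶ Y) (g : Z ⟶ Y) :
    Over.pullback (pullback.fst g f) ⋙ Over.map (pullback.snd g f) ≅
      Over.map g ⋙ Over.pullback f :=
  NatIso.ofComponents
    (fun A => Over.isoMk (pullbackRightPullbackFstIso g f A.hom) (by simp))
    (fun {A B} u => by
      ext
      dsimp
      apply pullback.hom_ext
      · simp
        refine (pullback.lift_fst _ _ _).trans ?_
        refine Eq.trans ?_ (congrArg ((pullbackRightPullbackFstIso g f A.hom).hom ≫ ·)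
          (pullback.lift_fst _ _ _).symm)
        simp
      · simp
        refine (pullback.lift_snd_assoc _ _ _ _).trans ?_
        refine Eq.trans ?_ (congrArg ((pullbackRightPullbackFstIso g f A.hom).hom ≫ ·)
          (pullback.lift_snd _ _ _).symm)
        simp)

end EffDescAux

/-- Effective descent morphisms are stable under pullback: if `f : X ⟶ Y` is an effective
descent morphism and `g : Z ⟶ Y` is any morphism, then the projection
`π : Z ×_Y X ⟶ Z` is an effective descent morphism. -/
theorem effectiveDescentMorphism_pullback
    {C : Type u₁} [Category.{v₁} C] [HasFiniteLimits C]
    {X Y Z : C} (f : X ⟶ Y) (g : Z ⟶ Y)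
    (hf : EffectiveDescentMorphism f) :
    EffectiveDescentMorphism (pullback.fst g f) := by
  obtain ⟨hf⟩ := hf
  letI : MonadicRightAdjoint (Over.pullback f) := hf
  set p := pullback.fst g f with hp
  set q := pullback.snd g f with hq
  -- preservation of colimits by the various left adjoints
  haveI : PreservesColimitsOfSize.{0, 0} (Over.map g) :=
    (Over.mapPullbackAdj g).leftAdjoint_preservesColimits
  haveI : PreservesColimitsOfSize.{0, 0} (Over.forget Y) :=
    (Over.forgetAdjStar Y).leftAdjoint_preservesColimits
  haveI : PreservesColimitsOfSize.{0, 0} (Over.forget X) :=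
    (Over.forgetAdjStar X).leftAdjoint_preservesColimits
  -- `f*` reflects isomorphisms
  haveI : (Over.pullback f).ReflectsIsomorphisms := reflectsIsomorphisms_of_monadic _
  -- transporting split pairs across the Beck–Chevalley isomorphism
  have key : ∀ {A B : Over Z} (u v : A ⟶ B), (Over.pullback p).IsSplitPair u v →
      (Over.pullback f).IsSplitPair ((Over.map g).map u) ((Over.map g).map v) := by
    intro A B u v hsp
    haveI := hsp
    haveI : HasSplitCoequalizer ((Over.pullback p ⋙ Over.map q).map u)
        ((Over.pullback p ⋙ Over.map q).map v) :=
      inferInstanceAs (HasSplitCoequalizer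
        ((Over.map q).map ((Over.pullback p).map u))
        ((Over.map q).map ((Over.pullback p).map v)))
    exact hasSplitCoequalizer_of_natIso (effDescBCIso f g) u v
  -- Step 1: reflects isomorphisms
  haveI refl : (Over.pullback p).ReflectsIsomorphisms := by
    constructor
    intro A B u hu
    have h1 : IsIso ((Over.pullback p ⋙ Over.map q).map u) :=
      inferInstanceAs (IsIso ((Over.map q).map ((Over.pullback p).map u)))
    rw [NatIso.isIso_map_iff (effDescBCIso f g) u] at h1
    have h1' : IsIso ((Over.pullback f).map ((Over.map g).map u)) := h1
    have h2 : IsIso ((Over.map g).map u) := isIso_of_reflects_iso _ (Over.pullback f)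
    have h3 : IsIso ((Over.forget Y).map ((Over.map g).map u)) := inferInstance
    have h4 : IsIso ((Over.forget Z).map u) := h3
    exact isIso_of_reflects_iso u (Over.forget Z)
  -- Step 2: has coequalizers of split pairs
  haveI hco : Monad.HasCoequalizerOfIsSplitPair (Over.pullback p) := by
    constructor
    intro A B u v hsp
    haveI := key u v hsp
    haveI : CreatesColimit (parallelPair ((Over.map g).map u) ((Over.map g).map v))
        (Over.pullback f) :=
      Monad.createsGSplitCoequalizersOfMonadic (G := Over.pullback f)
        ((Over.map g).map u) ((Over.map g).map v)
    haveI : HasColimit (parallelPair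
        ((parallelPair ((Over.map g).map u) ((Over.map g).map v) ⋙ Over.pullback f).map
          WalkingParallelPairHom.left)
        ((parallelPair ((Over.map g).map u) ((Over.map g).map v) ⋙ Over.pullback f).map
          WalkingParallelPairHom.right)) :=
      inferInstanceAs (HasColimit (parallelPair
        ((Over.pullback f).map ((Over.map g).map u))
        ((Over.pullback f).map ((Over.map g).map v))))
    haveI : HasColimit (parallelPair ((Over.map g).map u) ((Over.map g).map v) ⋙
        Over.pullback f) := hasColimit_of_iso (diagramIsoParallelPair _)
    haveI h5 : HasCoequalizer ((Over.map g).map u) ((Over.map g).map v) :=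
      hasColimit_of_created _ (Over.pullback f)
    haveI : HasColimit ((parallelPair ((Over.map g).map u) ((Over.map g).map v)) ⋙
        Over.forget Y) :=
      ⟨⟨_, isColimitOfPreserves (Over.forget Y) (colimit.isColimit _)⟩⟩
    haveI h6 : HasColimit (parallelPair u.left v.left) := by
      have := hasColimit_of_iso (F := (parallelPair ((Over.map g).map u) ((Over.map g).map v)) ⋙
        Over.forget Y) (diagramIsoParallelPair _).symm
      exact this
    haveI : HasColimit (parallelPair
        ((parallelPair u v ⋙ Over.forget Z).map WalkingParallelPairHom.left)
        ((parallelPair u v ⋙ Over.forget Z).map WalkingParallelPairHom.right)) :=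
      inferInstanceAs (HasColimit (parallelPair u.left v.left))
    haveI : HasColimit (parallelPair u v ⋙ Over.forget Z) :=
      hasColimit_of_iso (diagramIsoParallelPair _)
    exact Over.hasColimit_of_hasColimit_comp_forget _
  -- Step 3: preserves coequalizers of split pairs
  haveI hpr : Monad.PreservesColimitOfIsSplitPair (Over.pullback p) := by
    constructor
    intro A B u v hsp
    haveI := key u v hsp
    haveI : CreatesColimit (parallelPair ((Over.map g).map u) ((Over.map g).map v))
        (Over.pullback f) :=
      Monad.createsGSplitCoequalizersOfMonadic (G := Over.pullback f)
        ((Over.map g).map u) ((Over.map g).map v)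
    haveI : HasColimit (parallelPair
        ((parallelPair ((Over.map g).map u) ((Over.map g).map v) ⋙ Over.pullback f).map
          WalkingParallelPairHom.left)
        ((parallelPair ((Over.map g).map u) ((Over.map g).map v) ⋙ Over.pullback f).map
          WalkingParallelPairHom.right)) :=
      inferInstanceAs (HasColimit (parallelPair
        ((Over.pullback f).map ((Over.map g).map u))
        ((Over.pullback f).map ((Over.map g).map v))))
    haveI : HasColimit (parallelPair ((Over.map g).map u) ((Over.map g).map v) ⋙
        Over.pullback f) := hasColimit_of_iso (diagramIsoParallelPair _)
    haveI : PreservesColimit (parallelPair ((Over.map g).map u) ((Over.map g).map v))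
        (Over.pullback f) := preservesColimit_of_createsColimit_and_hasColimit _ _
    haveI : PreservesColimit (parallelPair
        ((parallelPair u v ⋙ Over.map g).map WalkingParallelPairHom.left)
        ((parallelPair u v ⋙ Over.map g).map WalkingParallelPairHom.right))
        (Over.pullback f) :=
      inferInstanceAs (PreservesColimit
        (parallelPair ((Over.map g).map u) ((Over.map g).map v)) (Over.pullback f))
    haveI : PreservesColimit (parallelPair u v ⋙ Over.map g) (Over.pullback f) :=
      preservesColimit_of_iso_diagram _ (diagramIsoParallelPair _).symm
    constructor
    intro c hc
    have h1 : IsColimit ((Over.pullback f).mapCocone ((Over.map g).mapCocone c)) :=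
      isColimitOfPreserves _ (isColimitOfPreserves _ hc)
    have h2 : IsColimit ((Over.map g ⋙ Over.pullback f).mapCocone c) := h1
    have h3 : IsColimit ((Over.pullback p ⋙ Over.map q).mapCocone c) :=
      (IsColimit.mapCoconeEquiv (effDescBCIso f g).symm) h2
    have h4 : IsColimit ((Over.map q ⋙ Over.forget X).mapCocone
        ((Over.pullback p).mapCocone c)) :=
      isColimitOfPreserves (Over.forget X)
        (show IsColimit ((Over.map q).mapCocone ((Over.pullback p).mapCocone c)) from h3)
    exact ⟨isColimitOfReflects (Over.map q ⋙ Over.forget X) h4⟩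
  exact ⟨Monad.monadicOfHasPreservesGSplitCoequalizersOfReflectsIsomorphisms
    (Over.mapPullbackAdj p)⟩
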